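/- Sitewise transport gap for GPA: fix τ ∈ (0,1] and a threshold vector γ_1,…,γ_n with γ_i ∈ [0,1], let ℓ be the allocation produced by the GPA policy, and let ℓ* be any feasible offline allocation (nonnegative, with Σ_i Σ_t ℓ*_i^t ≤ s). If site i satisfies w_i > 0 and γ_i ≤ τ·p·c_i/w_i, then transport_i(ℓ) − transport_i(ℓ*) ≤ τ·penalty_i(ℓ*) + 2p·(b_i + c_i). -/

import Mathlib

open Finset

/-- `stock b d ℓ t` is the post-replenishment stock `k^{t+1}` at a single site
(with `stock b d ℓ 0 = k^1 = b`), under demands `d` and allocations `ℓ`. -/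
noncomputable def stock (b : ℕ) (d : ℕ → ℕ) (ℓ : ℕ → ℝ) : ℕ → ℝ
  | 0 => (b : ℝ)
  | t + 1 => max (stock b d ℓ t - (d (t + 1) : ℝ)) 0 + ℓ (t + 1)

/-- Sitewise transport cost `Σ_{t=1}^T w_i ⌈ℓ_i^t / c_i⌉`. -/
noncomputable def transportCost (T : ℕ) (wi : ℝ) (ci : ℕ) (ℓ : ℕ → ℝ) : ℝ :=
  ∑ t ∈ Icc 1 T, wi * (⌈ℓ t / (ci : ℝ)⌉ : ℝ)

/-- Sitewise lost-sales penalty `Σ_{t=1}^T p (d_i^t − k_i^t)_+`. -/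
noncomputable def penaltyCost (T : ℕ) (p : ℝ) (b : ℕ) (d : ℕ → ℕ) (ℓ : ℕ → ℝ) : ℝ :=
  ∑ t ∈ Icc 1 T, p * max ((d t : ℝ) - stock b d ℓ (t - 1)) 0

/-- Total cost of an allocation. -/
noncomputable def totalCost {n : ℕ} (T : ℕ) (w : Fin n → ℝ) (c b : Fin n → ℕ)
    (p : ℝ) (d : Fin n → ℕ → ℕ) (ℓ : Fin n → ℕ → ℝ) : ℝ :=
  ∑ i, (transportCost T (w i) (c i) (ℓ i) + penaltyCost T p (b i) (d i) (ℓ i))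

/-- One time step of GPA: eligible sites are processed in index order; site `i` is
eligible if `r i < b i` and `Lprev i ≤ γ i * Dt i`; an eligible site requests
`⌈(b i − r i)/c i⌉` full shipments and receives the min of that and the remaining
hub supply. Returns the remaining supply and the per-site allocation. -/
noncomputable def gpaInner {n : ℕ} (b c : Fin n → ℕ) (γ : Fin n → ℝ)
    (Dt Lprev r : Fin n → ℕ) (rem : ℕ) : ℕ × (Fin n → ℕ) :=
  (List.finRange n).foldl
    (fun (st : ℕ × (Fin n → ℕ)) (i : Fin n) =>
      if r i < b i ∧ (Lprev i : ℝ) ≤ γ i * (Dt i : ℝ) then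
        let q : ℕ := (b i - r i + c i - 1) / c i
        let give : ℕ := min st.1 (c i * q)
        (st.1 - give, Function.update st.2 i give)
      else st)
    (rem, fun _ => 0)

/-- GPA state after `t` time steps: (remaining hub supply, current stocks `k^{t+1}`,
cumulative allocations `L^t`). Initially `(s, b, 0)`. -/
noncomputable def gpaState {n : ℕ} (b c : Fin n → ℕ) (γ : Fin n → ℝ)
    (d : Fin n → ℕ → ℕ) (s : ℕ) : ℕ → ℕ × (Fin n → ℕ) × (Fin n → ℕ)
  | 0 => (s, b, fun _ => 0)
  | t + 1 =>
    let st := gpaState b c γ d s t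
    let r : Fin n → ℕ := fun i => st.2.1 i - d i (t + 1)
    let Dt : Fin n → ℕ := fun i => ∑ u ∈ Icc 1 (t + 1), d i u
    let res := gpaInner b c γ Dt st.2.2 r st.1
    (res.1, fun i => r i + res.2 i, fun i => st.2.2 i + res.2 i)

/-- Cumulative GPA allocation `L_i^t`. -/
noncomputable def gpaL {n : ℕ} (b c : Fin n → ℕ) (γ : Fin n → ℝ)
    (d : Fin n → ℕ → ℕ) (s : ℕ) (i : Fin n) (t : ℕ) : ℕ :=
  (gpaState b c γ d s t).2.2 i

/-- Per-step GPA allocation `ℓ_i^t` (as a real number). -/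
noncomputable def gpaAlloc {n : ℕ} (b c : Fin n → ℕ) (γ : Fin n → ℝ)
    (d : Fin n → ℕ → ℕ) (s : ℕ) (i : Fin n) (t : ℕ) : ℝ :=
  ((gpaL b c γ d s i t - gpaL b c γ d s i (t - 1) : ℕ) : ℝ)

lemma stock_identity (b : ℕ) (d : ℕ → ℕ) (ℓ : ℕ → ℝ) (T : ℕ) :
    stock b d ℓ T = b + ∑ t ∈ Icc 1 T,
      (ℓ t + max ((d t : ℝ) - stock b d ℓ (t - 1)) 0 - (d t : ℝ)) := by
  induction T with
  | zero => simp [stock]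
  | succ T ih =>
    rw [Finset.sum_Icc_succ_top (Nat.le_add_left 1 T), ← add_assoc, ← ih]
    have h : max (stock b d ℓ T - (d (T+1) : ℝ)) 0
        = stock b d ℓ T - (d (T+1):ℝ) + max ((d (T+1):ℝ) - stock b d ℓ T) 0 := by
      rcases le_total (stock b d ℓ T) ((d (T+1):ℝ)) with h | h
      · rw [max_eq_right (by linarith : stock b d ℓ T - (d (T+1):ℝ) ≤ 0),
            max_eq_left (by linarith : (0:ℝ) ≤ (d (T+1):ℝ) - stock b d ℓ T)]; ring
      · rw [max_eq_left (by linarith : (0:ℝ) ≤ stock b d ℓ T - (d (T+1):ℝ)),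
            max_eq_right (by linarith : (d (T+1):ℝ) - stock b d ℓ T ≤ 0)]; ring
    simp only [stock, h, Nat.add_sub_cancel]
    ring

lemma stock_nonneg (b : ℕ) (d : ℕ → ℕ) (ℓ : ℕ → ℝ) (T : ℕ)
    (hℓ : ∀ t ∈ Icc 1 T, 0 ≤ ℓ t) : 0 ≤ stock b d ℓ T := by
  induction T with
  | zero => simp [stock]
  | succ T ih =>
    have h1 : 0 ≤ stock b d ℓ T := ih (fun t ht => hℓ t (by
      simp only [mem_Icc] at ht ⊢; omega))
    have h2 : 0 ≤ ℓ (T+1) := hℓ (T+1) (by simp)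
    simp only [stock]
    have := le_max_right (stock b d ℓ T - (d (T+1):ℝ)) 0
    linarith

lemma demand_le (b : ℕ) (d : ℕ → ℕ) (ℓ : ℕ → ℝ) (T : ℕ)
    (hℓ : ∀ t ∈ Icc 1 T, 0 ≤ ℓ t) :
    (∑ t ∈ Icc 1 T, (d t : ℝ)) ≤ b + (∑ t ∈ Icc 1 T, ℓ t)
      + ∑ t ∈ Icc 1 T, max ((d t : ℝ) - stock b d ℓ (t - 1)) 0 := by
  have h := stock_identity b d ℓ T
  have h2 := stock_nonneg b d ℓ T hℓ
  rw [h] at h2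
  simp only [Finset.sum_sub_distrib, Finset.sum_add_distrib] at h2
  linarith

section foldl
variable {n : ℕ} (b c : Fin n → ℕ) (γ : Fin n → ℝ) (Dt Lprev r : Fin n → ℕ)

noncomputable def gstep : ℕ × (Fin n → ℕ) → Fin n → ℕ × (Fin n → ℕ) :=
  fun st i =>
      if r i < b i ∧ (Lprev i : ℝ) ≤ γ i * (Dt i : ℝ) then
        let q : ℕ := (b i - r i + c i - 1) / c i
        let give : ℕ := min st.1 (c i * q)
        (st.1 - give, Function.update st.2 i give)
      else st

lemma gpaInner_eq (rem : ℕ) :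
    gpaInner b c γ Dt Lprev r rem
      = (List.finRange n).foldl (gstep b c γ Dt Lprev r) (rem, fun _ => 0) := rfl

lemma gstep_fst_le (st : ℕ × (Fin n → ℕ)) (i : Fin n) :
    (gstep b c γ Dt Lprev r st i).1 ≤ st.1 := by
  unfold gstep
  split
  · exact Nat.sub_le _ _
  · exact le_rfl

lemma gstep_snd_ne (st : ℕ × (Fin n → ℕ)) {i j : Fin n} (h : j ≠ i) :
    (gstep b c γ Dt Lprev r st j).2 i = st.2 i := by
  unfold gstep
  split
  · exact Function.update_of_ne (Ne.symm h) _ _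
  · rfl

lemma foldl_fst_le (l : List (Fin n)) (st : ℕ × (Fin n → ℕ)) :
    ((l.foldl (gstep b c γ Dt Lprev r) st).1) ≤ st.1 := by
  induction l generalizing st with
  | nil => exact le_rfl
  | cons j l ih =>
    exact le_trans (ih _) (gstep_fst_le b c γ Dt Lprev r st j)

lemma foldl_snd_not_mem (l : List (Fin n)) (st : ℕ × (Fin n → ℕ)) {i : Fin n}
    (h : i ∉ l) : (l.foldl (gstep b c γ Dt Lprev r) st).2 i = st.2 i := by
  induction l generalizing st with
  | nil => rfl
  | cons j l ih =>
    simp only [List.mem_cons, not_or] at h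
    rw [List.foldl_cons, ih _ h.2, gstep_snd_ne b c γ Dt Lprev r st (fun e => h.1 e.symm)]

lemma foldl_spec (l : List (Fin n)) (st : ℕ × (Fin n → ℕ)) (i : Fin n)
    (hl : l.Nodup) (hi : i ∈ l) (h0 : st.2 i = 0) :
    (l.foldl (gstep b c γ Dt Lprev r) st).2 i ≤ st.1 ∧
    (¬(r i < b i ∧ (Lprev i : ℝ) ≤ γ i * (Dt i : ℝ)) →
        (l.foldl (gstep b c γ Dt Lprev r) st).2 i = 0) ∧
    ((r i < b i ∧ (Lprev i : ℝ) ≤ γ i * (Dt i : ℝ)) →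
        (l.foldl (gstep b c γ Dt Lprev r) st).2 i ≤ c i * ((b i - r i + c i - 1) / c i) ∧
        ((l.foldl (gstep b c γ Dt Lprev r) st).2 i = c i * ((b i - r i + c i - 1) / c i) ∨
          (l.foldl (gstep b c γ Dt Lprev r) st).1 = 0)) := by
  induction l generalizing st with
  | nil => cases hi
  | cons j l ih =>
    rw [List.nodup_cons] at hl
    rcases eq_or_ne i j with rfl | hij
    · -- i is processed first, then untouched
      have hnot : i ∉ l := hl.1
      rw [List.foldl_cons]
      have hsnd := foldl_snd_not_mem b c γ Dt Lprev r l (gstep b c γ Dt Lprev r st i) hnot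
      rw [hsnd]
      by_cases hcond : r i < b i ∧ (Lprev i : ℝ) ≤ γ i * (Dt i : ℝ)
      · have hstep : gstep b c γ Dt Lprev r st i
            = (st.1 - min st.1 (c i * ((b i - r i + c i - 1) / c i)),
               Function.update st.2 i (min st.1 (c i * ((b i - r i + c i - 1) / c i)))) := by
          unfold gstep; rw [if_pos hcond]
        rw [hstep]
        simp only [Function.update_self]
        refine ⟨min_le_left _ _, fun h => absurd hcond h, fun _ => ⟨min_le_right _ _, ?_⟩⟩
        rcases le_total (c i * ((b i - r i + c i - 1) / c i)) st.1 with h | h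
        · left; exact min_eq_right h
        · right
          have hle := foldl_fst_le b c γ Dt Lprev r l (gstep b c γ Dt Lprev r st i)
          rw [hstep] at hle
          omega
      · have hstep : gstep b c γ Dt Lprev r st i = st := by
          unfold gstep; rw [if_neg hcond]
        rw [hstep, h0]
        exact ⟨Nat.zero_le _, fun _ => rfl, fun h => absurd h hcond⟩
    · have hi' : i ∈ l := by
        rcases List.mem_cons.mp hi with h | h
        · exact absurd h hij
        · exact h
      rw [List.foldl_cons]
      have h0' : (gstep b c γ Dt Lprev r st j).2 i = 0 := by
        rw [gstep_snd_ne b c γ Dt Lprev r st (Ne.symm hij)]; exact h0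
      have := ih (gstep b c γ Dt Lprev r st j) hl.2 hi' h0'
      exact ⟨le_trans this.1 (gstep_fst_le b c γ Dt Lprev r st j), this.2⟩

lemma gpaInner_spec (rem : ℕ) (i : Fin n) :
    (gpaInner b c γ Dt Lprev r rem).2 i ≤ rem ∧
    (¬(r i < b i ∧ (Lprev i : ℝ) ≤ γ i * (Dt i : ℝ)) →
        (gpaInner b c γ Dt Lprev r rem).2 i = 0) ∧
    ((r i < b i ∧ (Lprev i : ℝ) ≤ γ i * (Dt i : ℝ)) →
        (gpaInner b c γ Dt Lprev r rem).2 i ≤ c i * ((b i - r i + c i - 1) / c i) ∧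
        ((gpaInner b c γ Dt Lprev r rem).2 i = c i * ((b i - r i + c i - 1) / c i) ∨
          (gpaInner b c γ Dt Lprev r rem).1 = 0)) := by
  rw [gpaInner_eq]
  exact foldl_spec b c γ Dt Lprev r (List.finRange n) (rem, fun _ => 0) i
    (List.nodup_finRange n) (List.mem_finRange i) rfl

lemma gpaInner_fst_le (rem : ℕ) : (gpaInner b c γ Dt Lprev r rem).1 ≤ rem := by
  rw [gpaInner_eq]
  exact foldl_fst_le b c γ Dt Lprev r _ _

end foldl

section time
variable {n : ℕ} (b c : Fin n → ℕ) (γ : Fin n → ℝ) (d : Fin n → ℕ → ℕ) (s : ℕ)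

/-- shorthand for the step `gpaInner` result at time `t+1`. -/
noncomputable def gres (t : ℕ) : ℕ × (Fin n → ℕ) :=
  gpaInner b c γ (fun j => ∑ u ∈ Icc 1 (t + 1), d j u)
    (gpaState b c γ d s t).2.2
    (fun j => (gpaState b c γ d s t).2.1 j - d j (t + 1))
    (gpaState b c γ d s t).1

lemma gpaState_succ (t : ℕ) :
    gpaState b c γ d s (t + 1)
      = ((gres b c γ d s t).1,
         fun i => ((gpaState b c γ d s t).2.1 i - d i (t+1)) + (gres b c γ d s t).2 i,
         fun i => (gpaState b c γ d s t).2.2 i + (gres b c γ d s t).2 i) := rfl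

lemma gpaL_succ (i : Fin n) (t : ℕ) :
    gpaL b c γ d s i (t + 1) = gpaL b c γ d s i t + (gres b c γ d s t).2 i := rfl

lemma gpaAlloc_succ (i : Fin n) (t : ℕ) :
    gpaAlloc b c γ d s i (t + 1) = ((gres b c γ d s t).2 i : ℝ) := by
  unfold gpaAlloc
  rw [Nat.add_sub_cancel, gpaL_succ, Nat.add_sub_cancel_left]

lemma grem_succ_le (t : ℕ) :
    (gpaState b c γ d s (t+1)).1 ≤ (gpaState b c γ d s t).1 := by
  rw [gpaState_succ]
  exact gpaInner_fst_le _ _ _ _ _ _ _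

lemma gres_spec (i : Fin n) (t : ℕ) :
    (gres b c γ d s t).2 i ≤ (gpaState b c γ d s t).1 ∧
    (¬((gpaState b c γ d s t).2.1 i - d i (t+1) < b i ∧
        ((gpaState b c γ d s t).2.2 i : ℝ)
          ≤ γ i * ((∑ u ∈ Icc 1 (t + 1), d i u : ℕ) : ℝ)) →
        (gres b c γ d s t).2 i = 0) ∧
    (((gpaState b c γ d s t).2.1 i - d i (t+1) < b i ∧
        ((gpaState b c γ d s t).2.2 i : ℝ)
          ≤ γ i * ((∑ u ∈ Icc 1 (t + 1), d i u : ℕ) : ℝ)) →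
        (gres b c γ d s t).2 i
            ≤ c i * ((b i - ((gpaState b c γ d s t).2.1 i - d i (t+1)) + c i - 1) / c i) ∧
        ((gres b c γ d s t).2 i
            = c i * ((b i - ((gpaState b c γ d s t).2.1 i - d i (t+1)) + c i - 1) / c i) ∨
          (gres b c γ d s t).1 = 0)) :=
  gpaInner_spec b c γ _ _ _ _ i

lemma gpa_L_bound (i : Fin n) (hγ0 : 0 ≤ γ i) (t : ℕ) :
    (gpaL b c γ d s i t : ℝ) ≤ γ i * (∑ u ∈ Icc 1 t, (d i u : ℝ)) + (b i + c i) := by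
  induction t with
  | zero =>
    simp only [gpaL, gpaState, Icc_self]
    simp
    positivity
  | succ t ih =>
    have hD : (∑ u ∈ Icc 1 t, (d i u : ℝ)) ≤ ∑ u ∈ Icc 1 (t+1), (d i u : ℝ) := by
      rw [Finset.sum_Icc_succ_top (Nat.le_add_left 1 t)]
      have : (0:ℝ) ≤ (d i (t+1) : ℝ) := Nat.cast_nonneg _
      linarith
    have hspec := gres_spec b c γ d s i t
    by_cases hcond : (gpaState b c γ d s t).2.1 i - d i (t+1) < b i ∧
        ((gpaState b c γ d s t).2.2 i : ℝ)
          ≤ γ i * ((∑ u ∈ Icc 1 (t + 1), d i u : ℕ) : ℝ)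
    · have h1 := (hspec.2.2 hcond).1
      have h2 : c i * ((b i - ((gpaState b c γ d s t).2.1 i - d i (t+1)) + c i - 1) / c i)
          ≤ b i + c i := by
        have := Nat.mul_div_le (b i - ((gpaState b c γ d s t).2.1 i - d i (t+1)) + c i - 1) (c i)
        omega
      have h3 : ((gres b c γ d s t).2 i : ℝ) ≤ (b i : ℝ) + c i := by
        have : (gres b c γ d s t).2 i ≤ b i + c i := le_trans h1 h2
        exact_mod_cast this
      have h4 : ((gpaL b c γ d s i t : ℕ) : ℝ) ≤ γ i * (∑ u ∈ Icc 1 (t+1), (d i u : ℝ)) := by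
        have := hcond.2
        rw [Nat.cast_sum] at this
        exact this
      rw [gpaL_succ]
      push_cast
      linarith
    · have h0 := hspec.2.1 hcond
      rw [gpaL_succ, h0, Nat.add_zero]
      have : γ i * (∑ u ∈ Icc 1 t, (d i u : ℝ)) ≤ γ i * ∑ u ∈ Icc 1 (t+1), (d i u : ℝ) :=
        mul_le_mul_of_nonneg_left hD hγ0
      linarith

lemma gpa_transport_bound (i : Fin n) (wi : ℝ) (hw : 0 ≤ wi) (hc : 1 ≤ c i) (t : ℕ) :
    ∑ u ∈ Icc 1 t, wi * (⌈gpaAlloc b c γ d s i u / (c i : ℝ)⌉ : ℝ)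
      ≤ wi / c i * (gpaL b c γ d s i t : ℝ)
        + (if (gpaState b c γ d s t).1 = 0 then wi else 0) := by
  have hcR : (0:ℝ) < (c i : ℝ) := by exact_mod_cast hc
  induction t with
  | zero =>
    simp only [gpaL, gpaState, Icc_self]
    simp
    rcases eq_or_ne s 0 with hs | hs <;> simp [hs, hw]
  | succ t ih =>
    have hif : (if (gpaState b c γ d s t).1 = 0 then wi else 0)
        ≤ (if (gpaState b c γ d s (t+1)).1 = 0 then wi else 0) := by
      have hmono := grem_succ_le b c γ d s t
      split
      · next h => rw [if_pos (by omega)]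
      · next h => split <;> [exact hw; exact le_rfl]
    have hspec := gres_spec b c γ d s i t
    rw [Finset.sum_Icc_succ_top (Nat.le_add_left 1 t), gpaAlloc_succ]
    have hLsucc : ((gpaL b c γ d s i (t+1) : ℕ) : ℝ)
        = (gpaL b c γ d s i t : ℝ) + ((gres b c γ d s t).2 i : ℝ) := by
      rw [gpaL_succ]; push_cast; ring
    -- case analysis on the step allocation
    rcases Nat.eq_zero_or_pos ((gres b c γ d s t).2 i) with halloc | halloc
    · -- nothing shipped this step
      rw [halloc]
      simp only [Nat.cast_zero, zero_div, Int.ceil_zero, Int.cast_zero, mul_zero, add_zero]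
      rw [hLsucc, halloc]
      simp only [Nat.cast_zero, add_zero]
      linarith
    · -- something shipped: condition held
      have hcond : (gpaState b c γ d s t).2.1 i - d i (t+1) < b i ∧
          ((gpaState b c γ d s t).2.2 i : ℝ)
            ≤ γ i * ((∑ u ∈ Icc 1 (t + 1), d i u : ℕ) : ℝ) := by
        by_contra h
        exact absurd (hspec.2.1 h) (by omega)
      have hrem : (gpaState b c γ d s t).1 ≠ 0 := by
        have := hspec.1; omega
      rw [if_neg hrem] at ih
      rcases (hspec.2.2 hcond).2 with hfull | hzero
      · -- full shipment: exact multiple of c i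
        set q := (b i - ((gpaState b c γ d s t).2.1 i - d i (t+1)) + c i - 1) / c i with hq
        have hdiv : ((c i * q : ℕ) : ℝ) / (c i : ℝ) = (q : ℝ) := by
          push_cast
          rw [mul_comm, mul_div_assoc, div_self (ne_of_gt hcR), mul_one]
        have hceil : (⌈((gres b c γ d s t).2 i : ℝ) / (c i : ℝ)⌉ : ℝ) = (q : ℝ) := by
          rw [hfull, hdiv, Int.ceil_natCast, Int.cast_natCast]
        have heq : wi * (q : ℝ) = wi / c i * ((gres b c γ d s t).2 i : ℝ) := by
          rw [hfull]
          push_cast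
          field_simp
        have hpos : (0:ℝ) ≤ (if (gpaState b c γ d s (t+1)).1 = 0 then wi else 0) := by
          split <;> [exact hw; exact le_rfl]
        rw [hceil, hLsucc, heq]
        linarith
      · -- supply exhausted
        have hceil : (⌈((gres b c γ d s t).2 i : ℝ) / (c i : ℝ)⌉ : ℝ)
            ≤ ((gres b c γ d s t).2 i : ℝ) / (c i : ℝ) + 1 :=
          le_of_lt (Int.ceil_lt_add_one _)
        have h1 : wi * (⌈((gres b c γ d s t).2 i : ℝ) / (c i : ℝ)⌉ : ℝ)
            ≤ wi / c i * ((gres b c γ d s t).2 i : ℝ) + wi := by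
          have := mul_le_mul_of_nonneg_left hceil hw
          calc wi * (⌈((gres b c γ d s t).2 i : ℝ) / (c i : ℝ)⌉ : ℝ)
              ≤ wi * (((gres b c γ d s t).2 i : ℝ) / (c i : ℝ) + 1) := this
            _ = wi / c i * ((gres b c γ d s t).2 i : ℝ) + wi := by field_simp
        have hifnew : (if (gpaState b c γ d s (t+1)).1 = 0 then wi else 0) = wi := by
          rw [if_pos]
          rw [gpaState_succ]
          exact hzero
        rw [hifnew, hLsucc]
        linarith


/-- **Sitewise transport gap for GPA.** For `τ ∈ (0,1]` and any feasible offline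
allocation `ℓ*`, if site `i` has `w i > 0` and `γ i ≤ τ·p·c_i/w_i`, then
`transport_i(ℓ) − transport_i(ℓ*) ≤ τ·penalty_i(ℓ*) + 2p·(b_i + c_i)`. -/
theorem gpa_sitewise_transport_gap
    (n T : ℕ) (c b : Fin n → ℕ) (hc : ∀ i, 1 ≤ c i)
    (w : Fin n → ℝ) (hw : ∀ i, 0 ≤ w i)
    (p : ℝ) (hp : 0 ≤ p) (hwp : ∀ i, w i ≤ p * c i)
    (s : ℕ) (d : Fin n → ℕ → ℕ) (hd : ∀ i, ∀ t ∈ Icc 1 T, d i t ≤ b i)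
    (τ : ℝ) (hτ0 : 0 < τ) (hτ1 : τ ≤ 1)
    (γ : Fin n → ℝ) (hγ : ∀ i, 0 ≤ γ i ∧ γ i ≤ 1)
    (ℓ : Fin n → ℕ → ℝ) (hℓ : ℓ = fun i t => gpaAlloc b c γ d s i t)
    (ℓs : Fin n → ℕ → ℝ) (hℓs : ∀ i, ∀ t ∈ Icc 1 T, 0 ≤ ℓs i t)
    (hfeas : ∑ i, ∑ t ∈ Icc 1 T, ℓs i t ≤ (s : ℝ))
    :
    ∀ i, 0 < w i → γ i ≤ τ * p * c i / w i →
      transportCost T (w i) (c i) (ℓ i) - transportCost T (w i) (c i) (ℓs i)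
        ≤ τ * penaltyCost T p (b i) (d i) (ℓs i) + 2 * p * (b i + c i) := by
  intro i hwi hγle
  subst hℓ
  have hciR : (0:ℝ) < (c i : ℝ) := by exact_mod_cast hc i
  have hwiR : (0:ℝ) ≤ w i := hw i
  set ci : ℝ := (c i : ℝ) with hci
  set wi : ℝ := w i with hwi'
  set LT : ℝ := (gpaL b c γ d s i T : ℝ) with hLT
  set D : ℝ := ∑ t ∈ Icc 1 T, (d i t : ℝ) with hD
  set Ls : ℝ := ∑ t ∈ Icc 1 T, ℓs i t with hLs
  set Lost : ℝ := ∑ t ∈ Icc 1 T, max ((d i t : ℝ) - stock (b i) (d i) (ℓs i) (t - 1)) 0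
    with hLost
  -- GPA transport bound
  have h1 : transportCost T wi (c i) ((fun i t => gpaAlloc b c γ d s i t) i)
      ≤ wi / ci * LT + wi := by
    have hb := gpa_transport_bound b c γ d s i wi hwiR (hc i) T
    have hif : (if (gpaState b c γ d s T).1 = 0 then wi else 0) ≤ wi := by
      split <;> [exact le_rfl; exact hwiR]
    calc transportCost T wi (c i) ((fun i t => gpaAlloc b c γ d s i t) i)
        = ∑ u ∈ Icc 1 T, wi * (⌈gpaAlloc b c γ d s i u / ci⌉ : ℝ) := rfl
      _ ≤ wi / ci * LT + (if (gpaState b c γ d s T).1 = 0 then wi else 0) := hb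
      _ ≤ wi / ci * LT + wi := by linarith
  have h2 : LT ≤ γ i * D + ((b i : ℝ) + ci) := gpa_L_bound b c γ d s i (hγ i).1 T
  have h3 : D ≤ (b i : ℝ) + Ls + Lost := by
    have := demand_le (b i) (d i) (ℓs i) T (hℓs i)
    rw [hD, hLs, hLost]
    linarith
  have h4 : wi / ci * Ls ≤ transportCost T wi (c i) (ℓs i) := by
    rw [hLs, transportCost, Finset.mul_sum]
    apply Finset.sum_le_sum
    intro t _
    have hle := Int.le_ceil (ℓs i t / ci)
    calc wi / ci * ℓs i t = wi * (ℓs i t / ci) := by ring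
      _ ≤ wi * (⌈ℓs i t / ci⌉ : ℝ) := mul_le_mul_of_nonneg_left hle hwiR
  have h5 : penaltyCost T p (b i) (d i) (ℓs i) = p * Lost := by
    rw [penaltyCost, hLost, Finset.mul_sum]
  have h6 : 0 ≤ Lost := Finset.sum_nonneg fun t _ => le_max_right _ 0
  have h7 : 0 ≤ Ls := Finset.sum_nonneg fun t ht => hℓs i t ht
  -- scalar inequalities
  set g : ℝ := wi / ci with hg
  have hg0 : 0 ≤ g := div_nonneg hwiR (le_of_lt hciR)
  have hgp : g ≤ p := (div_le_iff₀ hciR).mpr (hwp i)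
  have hgci : g * ci = wi := div_mul_cancel₀ wi (ne_of_gt hciR)
  have hγ0 : 0 ≤ γ i := (hγ i).1
  have hγ1 : γ i ≤ 1 := (hγ i).2
  have hgγτ : g * γ i ≤ τ * p := by
    have hK : γ i * wi ≤ τ * p * ci := (le_div_iff₀ hwi).mp hγle
    rw [show g * γ i = (γ i * wi) / ci from by rw [hg]; ring]
    exact (div_le_iff₀ hciR).mpr hK
  have hgγ0 : 0 ≤ g * γ i := mul_nonneg hg0 hγ0
  have hgγg : g * γ i ≤ g := by
    calc g * γ i ≤ g * 1 := mul_le_mul_of_nonneg_left hγ1 hg0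
      _ = g := mul_one g
  have hgγp : g * γ i ≤ p := le_trans hgγτ (by nlinarith)
  have hb0 : (0:ℝ) ≤ (b i : ℝ) := Nat.cast_nonneg _
  have e5 : g * LT ≤ g * (γ i * D + ((b i : ℝ) + ci)) := mul_le_mul_of_nonneg_left h2 hg0
  have e1 : g * γ i * D ≤ g * γ i * ((b i : ℝ) + Ls + Lost) :=
    mul_le_mul_of_nonneg_left h3 hgγ0
  have e2 : g * γ i * Lost ≤ τ * p * Lost := mul_le_mul_of_nonneg_right hgγτ h6
  have e3 : g * γ i * Ls ≤ g * Ls := mul_le_mul_of_nonneg_right hgγg h7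
  have e4 : g * γ i * (b i : ℝ) ≤ p * (b i : ℝ) := mul_le_mul_of_nonneg_right hgγp hb0
  have e8 : g * (b i : ℝ) ≤ p * (b i : ℝ) := mul_le_mul_of_nonneg_right hgp hb0
  have e9 : wi ≤ p * ci := hwp i
  have e6 : g * (γ i * D + ((b i : ℝ) + ci)) = g * γ i * D + g * (b i : ℝ) + g * ci := by
    ring
  have e7 : g * γ i * ((b i : ℝ) + Ls + Lost)
      = g * γ i * (b i : ℝ) + g * γ i * Ls + g * γ i * Lost := by ring
  have hτpen : τ * penaltyCost T p (b i) (d i) (ℓs i) = τ * p * Lost := by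
    rw [h5]; ring
  have hpb : 0 ≤ p * (b i : ℝ) := mul_nonneg hp hb0
  linarith
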